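/- There exists a universal constant C > 0 such that the following holds. For every probability space (Ω, ℙ), every λ > 0, every natural number m ≥ 1, every natural number d ≥ 2, and every family ξ_{i,n} : Ω → ℝ (for i ∈ {1,…,m}, n ∈ {1,…,d}) of mutually independent random variables each of whose law is the Laplace distribution with scale λ, one has E[max_{1 ≤ n ≤ d} |∑_{i=1}^m ξ_{i,n}|] ≤ C·√m·λ·ln d. -/

import Mathlib

open MeasureTheory Real ProbabilityTheory
open scoped ENNReal NNReal
section Aux
open Set
/-- The Laplace distribution with scale `lam > 0`: the measure on `ℝ` with density
`x ↦ (1/(2*lam)) * exp (-|x|/lam)` with respect to Lebesgue measure. -/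
noncomputable def laplaceMeasure (lam : ℝ) : Measure ℝ :=
  volume.withDensity fun x => ENNReal.ofReal ((1 / (2 * lam)) * Real.exp (-|x| / lam))

lemma integral_exp_neg_mul_Ioi' {b : ℝ} (hb : 0 < b) :
    ∫ x in Ioi (0:ℝ), exp (-(b*x)) = b⁻¹ := by
  have h := integral_comp_mul_left_Ioi (fun y => exp (-y)) 0 hb
  simp only [mul_zero, integral_exp_neg_Ioi_zero, smul_eq_mul, mul_one] at h
  exact h

lemma integrableOn_exp_neg_mul_Ioi' {b : ℝ} (hb : 0 < b) :
    IntegrableOn (fun x => exp (-(b*x))) (Ioi (0:ℝ)) := by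
  simpa [neg_mul] using exp_neg_integrableOn_Ioi 0 hb

lemma integral_exp_mul_Iic' {b : ℝ} (hb : 0 < b) :
    ∫ x in Iic (0:ℝ), exp (b*x) = b⁻¹ := by
  have h := integral_comp_neg_Iic (0:ℝ) (fun x => exp (-(b*x)))
  simp only [mul_neg, neg_neg, neg_zero] at h
  rw [h, integral_exp_neg_mul_Ioi' hb]

lemma integrableOn_exp_mul_Iic' {b : ℝ} (hb : 0 < b) :
    IntegrableOn (fun x => exp (b*x)) (Iic (0:ℝ)) := by
  have m : MeasurableEmbedding fun x : ℝ => -x := (Homeomorph.neg ℝ).measurableEmbedding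
  have : (volume : Measure ℝ) = Measure.map (fun x : ℝ => -x) volume :=
    (Measure.map_neg_eq_self (volume : Measure ℝ)).symm
  rw [IntegrableOn, this, m.restrict_map, m.integrable_map_iff]
  simp_rw [Function.comp_def, mul_neg, neg_preimage, neg_Iic, neg_zero]
  exact (integrableOn_Ici_iff_integrableOn_Ioi).mpr (integrableOn_exp_neg_mul_Ioi' hb)

lemma laplace_vol_key {lam s : ℝ} (hl : 0 < lam) (hs : |s| < 1/lam) :
    Integrable (fun x => exp (s*x) * ((1 / (2 * lam)) * exp (-|x| / lam))) volume ∧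
    ∫ x, exp (s*x) * ((1 / (2 * lam)) * exp (-|x| / lam)) = 1/(1 - s^2*lam^2) := by
  set c : ℝ := 1 / (2 * lam) with hc
  set g : ℝ → ℝ := fun x => exp (s*x) * (c * exp (-|x| / lam)) with hg
  have hs1 : s < 1/lam := (abs_lt.1 hs).2
  have hs2 : -(1/lam) < s := (abs_lt.1 hs).1
  have hb1 : 0 < 1/lam - s := by linarith
  have hb2 : 0 < 1/lam + s := by linarith
  have hIoiEq : EqOn (fun x => c * exp (-((1/lam - s)*x))) g (Ioi 0) := by
    intro x hx
    have : |x| = x := abs_of_pos hx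
    simp only [hg, this]
    rw [mul_left_comm, ← exp_add]
    congr 1
    ring
  have hIicEq : EqOn (fun x => c * exp ((1/lam + s)*x)) g (Iic 0) := by
    intro x hx
    have : |x| = -x := abs_of_nonpos hx
    simp only [hg, this]
    rw [mul_left_comm, ← exp_add]
    congr 1
    ring
  have hIoi : IntegrableOn g (Ioi 0) :=
    IntegrableOn.congr_fun ((integrableOn_exp_neg_mul_Ioi' hb1).const_mul c) hIoiEq measurableSet_Ioi
  have hIic : IntegrableOn g (Iic 0) :=
    IntegrableOn.congr_fun ((integrableOn_exp_mul_Iic' hb2).const_mul c) hIicEq measurableSet_Iic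
  have hint : Integrable g volume := by
    rw [← integrableOn_univ, ← Iic_union_Ioi (a := (0:ℝ))]
    exact hIic.union hIoi
  refine ⟨hint, ?_⟩
  have vIoi : ∫ x in Ioi (0:ℝ), g x = c * (1/lam - s)⁻¹ := by
    rw [← setIntegral_congr_fun measurableSet_Ioi hIoiEq, integral_const_mul,
      integral_exp_neg_mul_Ioi' hb1]
  have vIic : ∫ x in Iic (0:ℝ), g x = c * (1/lam + s)⁻¹ := by
    rw [← setIntegral_congr_fun measurableSet_Iic hIicEq, integral_const_mul,
      integral_exp_mul_Iic' hb2]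
  rw [← intervalIntegral.integral_Iic_add_Ioi hIic hIoi, vIic, vIoi, hc]
  have h1 : 1/lam - s ≠ 0 := ne_of_gt hb1
  have h2 : 1/lam + s ≠ 0 := ne_of_gt hb2
  have h3 : (1:ℝ) - s^2*lam^2 ≠ 0 := by
    have : s^2 < (1/lam)^2 := by
      have := sq_abs s ▸ pow_lt_pow_left₀ hs (abs_nonneg s) (by norm_num)
      simpa using this
    have hlam2 : (0:ℝ) < lam^2 := by positivity
    have : s^2 * lam^2 < (1/lam)^2 * lam^2 := by nlinarith
    have : s^2*lam^2 < 1 := by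
      rwa [div_pow, one_pow, div_mul_cancel₀] at this
      positivity
    linarith
  have hlam : lam ≠ 0 := hl.ne'
  have hC : (0:ℝ) < 1 + s*lam := by
    have h := mul_pos hb2 hl
    have e : (1/lam + s) * lam = 1 + s*lam := by field_simp
    linarith [e ▸ h]
  have hD : (0:ℝ) < 1 - s*lam := by
    have h := mul_pos hb1 hl
    have e : (1/lam - s) * lam = 1 - s*lam := by field_simp
    linarith [e ▸ h]
  have e1 : (1/lam - s)⁻¹ = lam/(1 - s*lam) := by
    rw [show 1/lam - s = (1 - s*lam)/lam by field_simp, inv_div]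
  have e2 : (1/lam + s)⁻¹ = lam/(1 + s*lam) := by
    rw [show 1/lam + s = (1 + s*lam)/lam by field_simp, inv_div]
  rw [e1, e2]
  rw [show (1:ℝ) - s^2*lam^2 = (1 - s*lam)*(1 + s*lam) by ring]
  rw [eq_div_iff (by positivity)]
  have hC' := hC.ne'
  have hD' := hD.ne'
  have hu : (1+s*lam)*(1+s*lam)⁻¹ = 1 := mul_inv_cancel₀ hC'
  have hv : (1-s*lam)*(1-s*lam)⁻¹ = 1 := mul_inv_cancel₀ hD'
  have hw : lam*lam⁻¹ = 1 := mul_inv_cancel₀ hlam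
  linear_combination (1/2)*((1+s*lam)⁻¹+(1-s*lam)⁻¹)*(1-s*lam)*(1+s*lam)*hw + (1/2)*(1-s*lam)*hu + (1/2)*(1+s*lam)*hv

lemma laplace_density_measurable (lam : ℝ) :
    Measurable fun x : ℝ => ENNReal.ofReal ((1 / (2 * lam)) * Real.exp (-|x| / lam)) := by
  measurability

lemma laplace_integrable_exp {lam s : ℝ} (hl : 0 < lam) (hs : |s| < 1/lam) :
    Integrable (fun x => exp (s*x)) (laplaceMeasure lam) := by
  rw [laplaceMeasure, integrable_withDensity_iff (laplace_density_measurable lam)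
    (Filter.Eventually.of_forall fun x => ENNReal.ofReal_lt_top)]
  have : ∀ x : ℝ, (ENNReal.ofReal ((1 / (2 * lam)) * Real.exp (-|x| / lam))).toReal
      = (1 / (2 * lam)) * Real.exp (-|x| / lam) := fun x =>
    ENNReal.toReal_ofReal (by positivity)
  simp_rw [this]
  exact (laplace_vol_key hl hs).1

lemma laplace_integral_exp {lam s : ℝ} (hl : 0 < lam) (hs : |s| < 1/lam) :
    ∫ x, exp (s*x) ∂(laplaceMeasure lam) = 1/(1 - s^2*lam^2) := by
  have hmeas : Measurable fun x : ℝ => ((1 / (2 * lam)) * Real.exp (-|x| / lam)).toNNReal := by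
    measurability
  have hrw : laplaceMeasure lam = volume.withDensity
      (fun x => (((1 / (2 * lam)) * Real.exp (-|x| / lam)).toNNReal : ℝ≥0∞)) := rfl
  rw [hrw, integral_withDensity_eq_integral_smul hmeas]
  rw [show (fun x => (((1 / (2 * lam)) * Real.exp (-|x| / lam)).toNNReal : ℝ≥0)
        • exp (s*x)) = fun x => exp (s*x) * ((1 / (2 * lam)) * Real.exp (-|x| / lam)) from
    funext fun x => by
      rw [NNReal.smul_def, smul_eq_mul, Real.coe_toNNReal _ (by positivity)]; ring]
  exact (laplace_vol_key hl hs).2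

lemma mgf_of_map {Ω : Type*} [MeasurableSpace Ω] {P : Measure Ω} {X : Ω → ℝ}
    (hX : Measurable X) {lam s : ℝ} (hl : 0 < lam) (hs : |s| < 1/lam)
    (hmap : P.map X = laplaceMeasure lam) :
    Integrable (fun ω => exp (s * X ω)) P ∧
      ∫ ω, exp (s * X ω) ∂P = 1/(1 - s^2*lam^2) := by
  have hg : AEStronglyMeasurable (fun x : ℝ => exp (s*x)) (P.map X) :=
    (measurable_exp.comp (measurable_const.mul measurable_id)).aestronglyMeasurable
  constructor
  · have h1 : Integrable (fun x => exp (s*x)) (P.map X) := by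
      rw [hmap]; exact laplace_integrable_exp hl hs
    exact (integrable_map_measure hg hX.aemeasurable).1 h1
  · rw [← integral_map hX.aemeasurable hg, hmap]
    exact laplace_integral_exp hl hs

end Aux

set_option maxHeartbeats 1000000

/-- There is a universal constant `C > 0` such that for any `m * d` mutually independent
Laplace(`lam`) random variables `ξ (i, n)`, the expectation of
`max_{n} |∑_{i} ξ (i, n)|` is at most `C * √m * lam * ln d`. -/
theorem expected_max_abs_sum_laplace :
    ∃ C : ℝ, 0 < C ∧
      ∀ (Ω : Type*) (_ : MeasurableSpace Ω) (P : Measure Ω), IsProbabilityMeasure P →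
      ∀ (lam : ℝ), 0 < lam →
      ∀ (m d : ℕ) (_ : 1 ≤ m) (hd : 2 ≤ d)
        (ξ : Fin m × Fin d → Ω → ℝ), (∀ q, Measurable (ξ q)) →
        iIndepFun ξ P →
        (∀ q, P.map (ξ q) = laplaceMeasure lam) →
        ∫⁻ ω, ENNReal.ofReal
            (Finset.univ.sup' ⟨(⟨0, by omega⟩ : Fin d), Finset.mem_univ _⟩
              fun n => |∑ i, ξ (i, n) ω|) ∂P
          ≤ ENNReal.ofReal (C * Real.sqrt m * lam * Real.log d) := by
  refine ⟨10, by norm_num, ?_⟩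
  intro Ω mΩ P hP lam hl m d hm hd ξ hmeas hIndep hmap
  -- basic numerology
  have hm1 : (1:ℝ) ≤ (m:ℝ) := by exact_mod_cast hm
  have hmpos : (0:ℝ) < m := by linarith
  have hsq1 : (1:ℝ) ≤ Real.sqrt m := by
    rw [show (1:ℝ) = Real.sqrt 1 by simp]
    exact Real.sqrt_le_sqrt hm1
  have hsqpos : (0:ℝ) < Real.sqrt m := by linarith
  have hsm : (Real.sqrt m)^2 = (m:ℝ) := Real.sq_sqrt (by positivity)
  have hd2 : (2:ℝ) ≤ (d:ℝ) := by exact_mod_cast hd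
  have hdpos : (0:ℝ) < d := by linarith
  set t : ℝ := 1 / (2 * lam * Real.sqrt m) with ht_def
  have htpos : 0 < t := by positivity
  have htlt : |t| < 1/lam := by
    rw [abs_of_pos htpos, ht_def]
    apply one_div_lt_one_div_of_lt hl
    nlinarith
  have hntlt : |(-t)| < 1/lam := by rwa [abs_neg]
  have ht2 : t^2 * lam^2 = 1/(4*(m:ℝ)) := by
    rw [ht_def, div_pow, one_pow, div_mul_eq_mul_div, mul_pow, hsm, one_mul, mul_pow]
    rw [div_eq_div_iff (by positivity) (by positivity)]
    ring
  -- the mgf constant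
  set K : ℝ := (1/(1 - t^2*lam^2))^m with hK_def
  have hx14 : 1/(4*(m:ℝ)) ≤ 1/4 := by
    apply one_div_le_one_div_of_le (by norm_num)
    linarith
  have hxpos : (0:ℝ) < 1/(4*(m:ℝ)) := by positivity
  have h1x : (3:ℝ)/4 ≤ 1 - t^2*lam^2 := by rw [ht2]; linarith
  have h1xpos : (0:ℝ) < 1 - t^2*lam^2 := by linarith
  have hKpos : 0 < K := by rw [hK_def]; positivity
  have hKle : K ≤ 2 := by
    rw [hK_def, one_div, inv_pow]
    have hbern : (3:ℝ)/4 ≤ (1 - t^2*lam^2)^m := by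
      have h := one_add_mul_le_pow (a := -(1/(4*(m:ℝ)))) (by nlinarith) m
      have : (1:ℝ) + m * -(1/(4*(m:ℝ))) = 3/4 := by
        field_simp
        ring
      rw [this] at h
      calc (3:ℝ)/4 ≤ (1 + -(1/(4*(m:ℝ))))^m := h
        _ = (1 - t^2*lam^2)^m := by rw [ht2]; ring_nf
    calc ((1 - t^2*lam^2)^m)⁻¹ ≤ ((3:ℝ)/4)⁻¹ := by
          apply inv_anti₀ (by norm_num) hbern
      _ ≤ 2 := by norm_num
  -- the random variables
  set F : Fin d → Ω → ℝ := fun n ω => ∑ i, ξ (i, n) ω with hF_def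
  have hFmeas : ∀ n, Measurable (F n) :=
    fun n => Finset.measurable_sum _ fun i _ => hmeas (i, n)
  have hint1 : ∀ s : ℝ, |s| < 1/lam → ∀ q, Integrable (fun ω => exp (s * ξ q ω)) P :=
    fun s hs q => (mgf_of_map (hmeas q) hl hs (hmap q)).1
  -- the embedded index sets
  have hinj : ∀ n : Fin d, Function.Injective (fun i : Fin m => (i, n)) :=
    fun n a b h => by simpa using congrArg Prod.fst h
  set sn : Fin d → Finset (Fin m × Fin d) :=
    fun n => Finset.univ.map ⟨fun i => (i, n), hinj n⟩ with hsn_def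
  have hsum : ∀ n, (∑ q ∈ sn n, ξ q) = F n := by
    intro n
    funext ω
    rw [hsn_def, Finset.sum_map, Finset.sum_apply]
    simp [hF_def]
  have hcard : ∀ n, (sn n).card = m := by
    intro n
    rw [hsn_def, Finset.card_map, Finset.card_univ, Fintype.card_fin]
  -- key identity
  have key : ∀ s : ℝ, |s| < 1/lam → ∀ n : Fin d,
      ∫⁻ ω, ENNReal.ofReal (exp (s * F n ω)) ∂P
        = ENNReal.ofReal ((1/(1 - s^2*lam^2))^m) := by
    intro s hs n
    have hIS : Integrable (fun ω => exp (s * (∑ q ∈ sn n, ξ q) ω)) P :=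
      hIndep.integrable_exp_mul_sum hmeas (fun q _ => hint1 s hs q)
    rw [hsum n] at hIS
    have hval : ∫ ω, exp (s * F n ω) ∂P = (1/(1 - s^2*lam^2))^m := by
      have h1 : ∫ ω, exp (s * F n ω) ∂P = mgf (∑ q ∈ sn n, ξ q) P s := by
        rw [mgf, hsum n]
      rw [h1, hIndep.mgf_sum hmeas (sn n)]
      have h2 : ∀ q ∈ sn n, mgf (ξ q) P s = 1/(1 - s^2*lam^2) := by
        intro q _
        rw [mgf]
        exact (mgf_of_map (hmeas q) hl hs (hmap q)).2
      rw [Finset.prod_congr rfl h2, Finset.prod_const, hcard n]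
    rw [← hval]
    exact (ofReal_integral_eq_lintegral_ofReal hIS
      (Filter.Eventually.of_forall fun ω => (exp_pos _).le)).symm
  -- constants
  set a : ℝ := (2*lam*Real.sqrt m) * Real.log (4*d) with ha_def
  have h1t : 1/t = 2*lam*Real.sqrt m := by rw [ht_def, one_div_one_div]
  have hta : t * a = Real.log (4*d) := by
    rw [ha_def, ht_def]
    field_simp
  have hlog4d_pos : 0 < Real.log (4*d) := Real.log_pos (by linarith)
  have hapos : 0 < a := by rw [ha_def]; positivity
  set c0 : ℝ := (2*lam*Real.sqrt m) * exp (-(t*a)) with hc0_def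
  have hc0pos : 0 < c0 := by rw [hc0_def]; positivity
  have hexpta : exp (-(t*a)) = 1/(4*d) := by
    rw [hta, exp_neg, Real.exp_log (by positivity), one_div]
  set G : Ω → ℝ := fun ω => ∑ n : Fin d, (exp (t * F n ω) + exp (-t * F n ω)) with hG_def
  have hGmeas : Measurable G := by
    rw [hG_def]
    exact Finset.measurable_sum _ fun n _ =>
      ((measurable_const.mul (hFmeas n)).exp.add ((measurable_const.mul (hFmeas n)).exp))
  have hGnonneg : ∀ ω, 0 ≤ G ω := fun ω => Finset.sum_nonneg fun n _ => by positivity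
  have hne0 : (Finset.univ : Finset (Fin d)).Nonempty := ⟨⟨0, by omega⟩, Finset.mem_univ _⟩
  -- pointwise bound
  have hpt : ∀ ω, (Finset.univ.sup' hne0 fun n => |F n ω|) ≤ a + c0 * G ω := by
    intro ω
    obtain ⟨N, -, hN⟩ := Finset.exists_mem_eq_sup' hne0 (fun n => |F n ω|)
    rw [hN]
    have h2 : exp (t * |F N ω|) ≤ G ω := by
      have hle : exp (t * |F N ω|) ≤ exp (t * F N ω) + exp (-t * F N ω) := by
        rcases abs_cases (F N ω) with ⟨h, -⟩ | ⟨h, -⟩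
        · rw [h]; linarith [exp_pos (-t * F N ω)]
        · rw [h, mul_neg, ← neg_mul]; linarith [exp_pos (t * F N ω)]
      refine hle.trans ?_
      exact Finset.single_le_sum (f := fun n => exp (t * F n ω) + exp (-t * F n ω))
        (fun n _ => by positivity) (Finset.mem_univ N)
    have h3 : t * (|F N ω| - a) ≤ exp (t * (|F N ω| - a)) := by
      linarith [Real.add_one_le_exp (t * (|F N ω| - a))]
    have h4 : exp (t * (|F N ω| - a)) = exp (t * |F N ω|) * exp (-(t*a)) := by
      rw [← exp_add]; ring_nf
    have h5 : |F N ω| - a ≤ (1/t) * (exp (t * |F N ω|) * exp (-(t*a))) := by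
      calc |F N ω| - a = (1/t) * (t * (|F N ω| - a)) := by field_simp
        _ ≤ (1/t) * exp (t * (|F N ω| - a)) :=
            mul_le_mul_of_nonneg_left h3 (by positivity)
        _ = (1/t) * (exp (t * |F N ω|) * exp (-(t*a))) := by rw [h4]
    have h6 : (1/t) * (exp (t * |F N ω|) * exp (-(t*a))) ≤ (1/t) * (G ω * exp (-(t*a))) := by
      refine mul_le_mul_of_nonneg_left ?_ (by positivity)
      exact mul_le_mul_of_nonneg_right h2 (exp_pos _).le
    have h7 : |F N ω| - a ≤ c0 * G ω := by
      calc |F N ω| - a ≤ (1/t) * (G ω * exp (-(t*a))) := h5.trans h6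
        _ = ((1/t) * exp (-(t*a))) * G ω := by ring
        _ = c0 * G ω := by rw [hc0_def, h1t]
    linarith
  -- value of ∫⁻ G
  have hGint : ∫⁻ ω, ENNReal.ofReal (G ω) ∂P = (d : ℝ≥0∞) * (2 * ENNReal.ofReal K) := by
    have hsplit : ∀ ω, ENNReal.ofReal (G ω) =
        ∑ n : Fin d, (ENNReal.ofReal (exp (t * F n ω)) + ENNReal.ofReal (exp (-t * F n ω))) := by
      intro ω
      rw [hG_def, ENNReal.ofReal_sum_of_nonneg (fun n _ => by positivity)]
      exact Finset.sum_congr rfl fun n _ => ENNReal.ofReal_add (exp_pos _).le (exp_pos _).le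
    simp_rw [hsplit]
    rw [lintegral_finset_sum (f := fun n ω => ENNReal.ofReal (exp (t * F n ω)) + ENNReal.ofReal (exp (-t * F n ω))) _ (fun n _ =>
      ((measurable_const.mul (hFmeas n)).exp.ennreal_ofReal.add
        ((measurable_const.mul (hFmeas n)).exp.ennreal_ofReal)))]
    have hterm : ∀ n : Fin d,
        (∫⁻ ω, (ENNReal.ofReal (exp (t * F n ω)) + ENNReal.ofReal (exp (-t * F n ω))) ∂P)
          = ENNReal.ofReal K + ENNReal.ofReal K := by
      intro n
      rw [lintegral_add_left (f := fun ω => ENNReal.ofReal (exp (t * F n ω))) ((measurable_const.mul (hFmeas n)).exp.ennreal_ofReal)]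
      rw [key t htlt n, key (-t) hntlt n]
      simp only [neg_sq, ← hK_def]
    rw [Finset.sum_congr rfl fun n _ => hterm n, Finset.sum_const, Finset.card_univ,
      Fintype.card_fin, nsmul_eq_mul]
    ring
  -- main chain
  have main : ∫⁻ ω, ENNReal.ofReal (Finset.univ.sup' hne0 fun n => |F n ω|) ∂P
      ≤ ENNReal.ofReal (10 * Real.sqrt m * lam * Real.log d) := by
    have step1 : ∫⁻ ω, ENNReal.ofReal (Finset.univ.sup' hne0 fun n => |F n ω|) ∂P
        ≤ ∫⁻ ω, (ENNReal.ofReal a + ENNReal.ofReal c0 * ENNReal.ofReal (G ω)) ∂P := by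
      apply lintegral_mono
      intro ω
      calc ENNReal.ofReal (Finset.univ.sup' hne0 fun n => |F n ω|)
          ≤ ENNReal.ofReal (a + c0 * G ω) := ENNReal.ofReal_le_ofReal (hpt ω)
        _ = ENNReal.ofReal a + ENNReal.ofReal (c0 * G ω) :=
            ENNReal.ofReal_add hapos.le (mul_nonneg hc0pos.le (hGnonneg ω))
        _ = ENNReal.ofReal a + ENNReal.ofReal c0 * ENNReal.ofReal (G ω) := by
            rw [ENNReal.ofReal_mul hc0pos.le]
    have step2 : ∫⁻ ω, (ENNReal.ofReal a + ENNReal.ofReal c0 * ENNReal.ofReal (G ω)) ∂P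
        = ENNReal.ofReal a + ENNReal.ofReal c0 * ((d : ℝ≥0∞) * (2 * ENNReal.ofReal K)) := by
      rw [lintegral_add_left measurable_const, lintegral_const, measure_univ, mul_one,
        lintegral_const_mul _ hGmeas.ennreal_ofReal, hGint]
    have step3 : ENNReal.ofReal a + ENNReal.ofReal c0 * ((d : ℝ≥0∞) * (2 * ENNReal.ofReal K))
        = ENNReal.ofReal (a + c0 * ((d:ℝ) * (2 * K))) := by
      rw [show ((d : ℝ≥0∞) : ℝ≥0∞) = ENNReal.ofReal (d:ℝ) from (ENNReal.ofReal_natCast d).symm,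
        show (2 : ℝ≥0∞) = ENNReal.ofReal (2:ℝ) from (ENNReal.ofReal_ofNat 2).symm,
        ← ENNReal.ofReal_mul (by norm_num : (0:ℝ) ≤ 2),
        ← ENNReal.ofReal_mul (by positivity : (0:ℝ) ≤ (d:ℝ)),
        ← ENNReal.ofReal_mul hc0pos.le,
        ← ENNReal.ofReal_add hapos.le (by positivity)]
    have step4 : a + c0 * ((d:ℝ) * (2 * K)) ≤ 10 * Real.sqrt m * lam * Real.log d := by
      have hc0val : c0 * ((d:ℝ) * (2 * K)) = lam * Real.sqrt m * K := by
        rw [hc0_def, hexpta]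
        field_simp
        ring
      have hlog4d : Real.log (4*d) = 2 * Real.log 2 + Real.log d := by
        rw [Real.log_mul (by norm_num) (by positivity),
          show (4:ℝ) = 2^2 by norm_num, Real.log_pow]
        push_cast
        ring
      have hlogd : Real.log 2 ≤ Real.log d := Real.log_le_log (by norm_num) hd2
      have hlog2 : (0.6931471803:ℝ) < Real.log 2 := Real.log_two_gt_d9
      have hLpos : (0:ℝ) < lam * Real.sqrt m := by positivity
      have h9 : lam * Real.sqrt m * K ≤ lam * Real.sqrt m * 2 :=
        mul_le_mul_of_nonneg_left hKle hLpos.le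
      have h8 : 0 ≤ (lam * Real.sqrt m) * (Real.log d - Real.log 2) :=
        mul_nonneg hLpos.le (by linarith)
      have h10 : 0.6931471803 * (lam * Real.sqrt m) ≤ Real.log 2 * (lam * Real.sqrt m) :=
        mul_le_mul_of_nonneg_right hlog2.le hLpos.le
      have habs : ∀ L l2 ld k : ℝ, 0 < L → l2 ≤ ld → 0.6931471803 < l2 → k ≤ 2 →
          2*L*(2*l2+ld) + L*k ≤ 10*L*ld := by
        intro L l2 ld k hL h1 h2 h3
        nlinarith [mul_le_mul_of_nonneg_left h1 hL.le, mul_le_mul_of_nonneg_left h3 hL.le,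
          mul_le_mul_of_nonneg_left h2.le hL.le]
      have hfin := habs (lam*Real.sqrt m) (Real.log 2) (Real.log d) K hLpos hlogd hlog2 hKle
      rw [hc0val, ha_def, hlog4d]
      linarith [hfin]
    calc ∫⁻ ω, ENNReal.ofReal (Finset.univ.sup' hne0 fun n => |F n ω|) ∂P
        ≤ ∫⁻ ω, (ENNReal.ofReal a + ENNReal.ofReal c0 * ENNReal.ofReal (G ω)) ∂P := step1
      _ = ENNReal.ofReal a + ENNReal.ofReal c0 * ((d : ℝ≥0∞) * (2 * ENNReal.ofReal K)) := step2
      _ = ENNReal.ofReal (a + c0 * ((d:ℝ) * (2 * K))) := step3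
      _ ≤ ENNReal.ofReal (10 * Real.sqrt m * lam * Real.log d) :=
          ENNReal.ofReal_le_ofReal step4
  exact main
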